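/- There exists a Borel measure φ on Ω_C which is finite on every compact subset of Ω_C but is not the surface area measure of any C-asymptotic convex set. In other words, local finiteness of a Borel measure on Ω_C is not sufficient for it to be the surface area measure of a C-asymptotic set. -/

import Mathlib

open scoped RealInnerProductSpace ENNReal NNReal
open MeasureTheory Metric Set

noncomputable section

variable {d : ℕ}

/-- `C` is a pointed closed convex cone with apex at the origin and nonempty interior. -/
def IsPCCCone (C : Set (EuclideanSpace ℝ (Fin d))) : Prop :=
  IsClosed C ∧ Convex ℝ C ∧ (∀ x ∈ C, ∀ t : ℝ, 0 ≤ t → t • x ∈ C) ∧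
    (∀ x ∈ C, -x ∈ C → x = 0) ∧ (interior C).Nonempty

/-- The polar cone `C°`. -/
def polarCone (C : Set (EuclideanSpace ℝ (Fin d))) : Set (EuclideanSpace ℝ (Fin d)) :=
  {x | ∀ y ∈ C, ⟪x, y⟫ ≤ 0}

/-- `Ω_C = S^{d-1} ∩ int C°`. -/
def omegaC (C : Set (EuclideanSpace ℝ (Fin d))) : Set (EuclideanSpace ℝ (Fin d)) :=
  Metric.sphere 0 1 ∩ interior (polarCone C)

/-- The reverse spherical image `τ(K, ω)`: the set of boundary points of `K` at which some
outer normal vector belongs to `ω`. -/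
def revSphImage (K ω : Set (EuclideanSpace ℝ (Fin d))) : Set (EuclideanSpace ℝ (Fin d)) :=
  {x ∈ frontier K | ∃ u ∈ ω, ∀ y ∈ K, ⟪u, y⟫ ≤ ⟪u, x⟫}

/-- The surface area measure `S_{d-1}(K, ω) = H^{d-1}(τ(K,ω))`. -/
def surfMeas (K ω : Set (EuclideanSpace ℝ (Fin d))) : ℝ≥0∞ :=
  μH[(d : ℝ) - 1] (revSphImage K ω)

/-- `K` is a `C`-asymptotic set. -/
def CAsymptotic (C K : Set (EuclideanSpace ℝ (Fin d))) : Prop :=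
  K.Nonempty ∧ IsClosed K ∧ Convex ℝ K ∧ K ⊆ C ∧
    ∀ ε > 0, ∃ R : ℝ, ∀ x ∈ frontier C, R ≤ ‖x‖ → Metric.infDist x K < ε

/-- `K` is a `C`-close set. -/
def CClose (C K : Set (EuclideanSpace ℝ (Fin d))) : Prop :=
  K.Nonempty ∧ IsClosed K ∧ Convex ℝ K ∧ K ⊆ C ∧ volume (C \ K) < ⊤

/-- `K` is a `C`-full set. -/
def CFull (C K : Set (EuclideanSpace ℝ (Fin d))) : Prop :=
  K.Nonempty ∧ IsClosed K ∧ Convex ℝ K ∧ K ⊆ C ∧ Bornology.IsBounded (C \ K)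

/-- The support function `h(K, u)`. -/
def suppFn (K : Set (EuclideanSpace ℝ (Fin d))) (u : EuclideanSpace ℝ (Fin d)) : ℝ :=
  sSup ((fun y => ⟪u, y⟫) '' K)

/-- `A_ε` within `Ω`. -/
def thick (Ω A : Set (EuclideanSpace ℝ (Fin d))) (ε : ℝ) : Set (EuclideanSpace ℝ (Fin d)) :=
  {y ∈ Ω | ∃ x ∈ A, dist x y < ε}

/-- The Lévy–Prokhorov distance of two measures (set functions) on `Ω`. -/
def lpDist (Ω : Set (EuclideanSpace ℝ (Fin d)))
    (μ ν : Set (EuclideanSpace ℝ (Fin d)) → ℝ≥0∞) : ℝ :=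
  sInf {ε : ℝ | 0 < ε ∧ ∀ A ⊆ Ω, MeasurableSet A →
    μ A ≤ ν (thick Ω A ε) + ENNReal.ofReal ε ∧ ν A ≤ μ (thick Ω A ε) + ENNReal.ofReal ε}

/-- The boundary of `Ω_C` relative to the sphere. -/
def bdOmega (C : Set (EuclideanSpace ℝ (Fin d))) : Set (EuclideanSpace ℝ (Fin d)) :=
  closure (omegaC C) \ omegaC C

/-- `Δ(ω)`: smallest angle between a vector of `ω` and a vector of `bd Ω_C`. -/
def sphDelta (C ω : Set (EuclideanSpace ℝ (Fin d))) : ℝ :=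
  sInf {θ | ∃ u ∈ ω, ∃ v ∈ bdOmega C, θ = InnerProductGeometry.angle u v}

/-- The bounded-Lipschitz norm `‖f‖_BL = ‖f‖_L + ‖f‖_∞` of `f` on `ω`. -/
def normBL (ω : Set (EuclideanSpace ℝ (Fin d))) (f : EuclideanSpace ℝ (Fin d) → ℝ) : ℝ :=
  sSup {t | ∃ u ∈ ω, ∃ v ∈ ω, u ≠ v ∧ t = |f u - f v| / dist u v} +
    sSup {t | ∃ u ∈ ω, t = |f u|}


open scoped Pointwise
section AuxLemmas

lemma polar_isClosed (C : Set (EuclideanSpace ℝ (Fin d))) : IsClosed (polarCone C) := by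
  have : polarCone C = ⋂ y ∈ C, {x : EuclideanSpace ℝ (Fin d) | ⟪x, y⟫ ≤ 0} := by
    ext x; simp [polarCone]
  rw [this]
  exact isClosed_biInter fun y _ => isClosed_le (continuous_id.inner continuous_const) continuous_const

lemma polar_convex (C : Set (EuclideanSpace ℝ (Fin d))) : Convex ℝ (polarCone C) := by
  intro x hx y hy a b ha hb hab
  intro z hz
  have := hx z hz; have := hy z hz
  rw [inner_add_left, real_inner_smul_left, real_inner_smul_left]
  nlinarith

lemma polar_smul {C : Set (EuclideanSpace ℝ (Fin d))} {x : EuclideanSpace ℝ (Fin d)}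
    (hx : x ∈ polarCone C) {c : ℝ} (hc : 0 ≤ c) : c • x ∈ polarCone C := by
  intro z hz
  rw [real_inner_smul_left]
  exact mul_nonpos_of_nonneg_of_nonpos hc (hx z hz)

lemma inner_le_of_interior {C : Set (EuclideanSpace ℝ (Fin d))}
    {u : EuclideanSpace ℝ (Fin d)} (hu : u ∈ interior (polarCone C)) :
    ∃ δ : ℝ, 0 < δ ∧ ∀ z ∈ C, ⟪u, z⟫ ≤ -δ * ‖z‖ := by
  obtain ⟨δ, hδ, hball⟩ := Metric.isOpen_iff.1 isOpen_interior u hu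
  refine ⟨δ/2, by positivity, fun z hz => ?_⟩
  rcases eq_or_ne z 0 with rfl | hz0
  · simp
  · have hznorm : (0:ℝ) < ‖z‖ := norm_pos_iff.2 hz0
    have hmem : u + (δ/2) • (‖z‖⁻¹ • z) ∈ polarCone C := by
      apply interior_subset
      apply hball
      rw [mem_ball_iff_norm]
      have heq : ‖u + (δ/2) • (‖z‖⁻¹ • z) - u‖ = δ/2 := by
        rw [add_sub_cancel_left, norm_smul, norm_smul, norm_inv, norm_norm,
          Real.norm_of_nonneg (by positivity)]
        field_simp
      rw [heq]; linarith
    have h2 := hmem z hz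
    rw [inner_add_left, real_inner_smul_left, real_inner_smul_left,
      real_inner_self_eq_norm_mul_norm] at h2
    have h4 : δ/2 * (‖z‖⁻¹ * (‖z‖ * ‖z‖)) = δ/2 * ‖z‖ := by field_simp
    linarith [h2, h4]

lemma smul_mem_interior {s : Set (EuclideanSpace ℝ (Fin d))}
    (hs : ∀ x ∈ s, ∀ t : ℝ, 0 ≤ t → t • x ∈ s)
    {x : EuclideanSpace ℝ (Fin d)} (hx : x ∈ interior s) {c : ℝ} (hc : 0 < c) :
    c • x ∈ interior s := by
  have hset : c • s = s := by
    apply Subset.antisymm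
    · rintro _ ⟨y, hy, rfl⟩; exact hs y hy c hc.le
    · intro y hy
      exact ⟨c⁻¹ • y, hs y hy c⁻¹ (by positivity), by
        simp [smul_smul, mul_inv_cancel₀ hc.ne']⟩
  have : c • x ∈ c • interior s := smul_mem_smul_set hx
  rwa [← interior_smul₀ hc.ne', hset] at this

lemma bipolar {C : Set (EuclideanSpace ℝ (Fin d))} (hC : IsPCCCone C)
    {x : EuclideanSpace ℝ (Fin d)} (hx : ∀ u ∈ polarCone C, ⟪u, x⟫ ≤ 0) : x ∈ C := by
  obtain ⟨hclosed, hconv, hcone, hpointed, hint⟩ := hC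
  have h0 : (0 : EuclideanSpace ℝ (Fin d)) ∈ C := by
    obtain ⟨a, ha⟩ := hint
    simpa using hcone a (interior_subset ha) 0 le_rfl
  by_contra hxC
  obtain ⟨f, r, hfa, hrx⟩ := geometric_hahn_banach_closed_point hconv hclosed hxC
  have hr0 : (0:ℝ) < r := by simpa using hfa 0 h0
  have hfle : ∀ a ∈ C, f a ≤ 0 := by
    intro a ha
    by_contra hpos
    push_neg at hpos
    have ht : (0:ℝ) ≤ (r+1)/(f a) := by positivity
    have := hfa (((r+1)/(f a)) • a) (hcone a ha _ ht)
    rw [_root_.map_smul, smul_eq_mul, div_mul_cancel₀ _ hpos.ne'] at this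
    linarith
  set y := (InnerProductSpace.toDual ℝ (EuclideanSpace ℝ (Fin d))).symm f with hy
  have hyC : y ∈ polarCone C := by
    intro a ha
    rw [hy, InnerProductSpace.toDual_symm_apply]
    exact hfle a ha
  have := hx y hyC
  rw [hy, InnerProductSpace.toDual_symm_apply] at this
  linarith

lemma interior_polar_nonempty {C : Set (EuclideanSpace ℝ (Fin d))} (hC : IsPCCCone C) :
    (interior (polarCone C)).Nonempty := by
  have hconvP : Convex ℝ (polarCone C) := by
    intro x hx y hy a b ha hb hab z hz
    have h1 := hx z hz; have h2 := hy z hz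
    rw [inner_add_left, real_inner_smul_left, real_inner_smul_left]
    nlinarith
  rw [hconvP.interior_nonempty_iff_affineSpan_eq_top]
  have h0 : (0 : EuclideanSpace ℝ (Fin d)) ∈ polarCone C := by
    intro y _; simp
  rw [AffineSubspace.affineSpan_eq_top_iff_vectorSpan_eq_top_of_nonempty ℝ _ _ ⟨0, h0⟩]
  have hspan : Submodule.span ℝ (polarCone C) = ⊤ := by
    by_contra hne
    have : (Submodule.span ℝ (polarCone C))ᗮ ≠ ⊥ := by
      intro hbot
      exact hne (Submodule.orthogonal_eq_bot_iff.1 hbot)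
    obtain ⟨v, hv, hv0⟩ := Submodule.exists_mem_ne_zero_of_ne_bot this
    have hvorth : ∀ u ∈ polarCone C, ⟪u, v⟫ = 0 := fun u hu =>
      (Submodule.mem_orthogonal _ _).1 hv u (Submodule.subset_span hu)
    have hvC : v ∈ C := bipolar ⟨hC.1, hC.2.1, hC.2.2.1, hC.2.2.2.1, hC.2.2.2.2⟩
      (fun u hu => le_of_eq (hvorth u hu))
    have hnvC : -v ∈ C := bipolar ⟨hC.1, hC.2.1, hC.2.2.1, hC.2.2.2.1, hC.2.2.2.2⟩
      (fun u hu => by rw [inner_neg_right, hvorth u hu, neg_zero])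
    exact hv0 (hC.2.2.2.1 v hvC hnvC)
  refine top_unique ?_
  rw [← hspan]
  apply Submodule.span_le.2
  intro z hz
  rw [SetLike.mem_coe, vectorSpan_def]
  apply Submodule.subset_span
  exact ⟨z, hz, 0, h0, by simp⟩

lemma slice_finite (hd : 1 ≤ d) {u : EuclideanSpace ℝ (Fin d)} (hu : ‖u‖ = 1)
    {s : Set (EuclideanSpace ℝ (Fin d))} (hb : Bornology.IsBounded s)
    (hs : ∀ z ∈ s, ⟪u, z⟫ = (-1 : ℝ)) : μH[(d:ℝ)-1] s < ⊤ := by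
  classical
  have hu0 : u ≠ 0 := by intro h; rw [h, norm_zero] at hu; norm_num at hu
  set W := (ℝ ∙ u)ᗮ with hW
  set m := Module.finrank ℝ W with hm
  have hdim : 0 ≤ (d:ℝ) - 1 := by
    have : (1:ℝ) ≤ (d:ℝ) := by exact_mod_cast hd
    linarith
  have hmd : ((m : ℝ)) = (d:ℝ) - 1 := by
    haveI : Fact (Module.finrank ℝ (EuclideanSpace ℝ (Fin d)) = (d-1) + 1) :=
      ⟨by rw [finrank_euclideanSpace_fin]; omega⟩
    have := Submodule.finrank_orthogonal_span_singleton (𝕜 := ℝ) (n := d - 1) hu0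
    rw [hm, this]
    push_cast [Nat.cast_sub hd]
    ring
  set e := (stdOrthonormalBasis ℝ W).repr with he
  set g : EuclideanSpace ℝ (Fin m) → EuclideanSpace ℝ (Fin d) :=
    fun x => ((e.symm x : W) : EuclideanSpace ℝ (Fin d)) - u with hg
  have hiso : Isometry g := by
    have h1 : Isometry fun x : EuclideanSpace ℝ (Fin m) =>
        ((e.symm x : W) : EuclideanSpace ℝ (Fin d)) :=
      W.subtypeₗᵢ.isometry.comp e.symm.isometry
    intro x y
    simp only [hg]
    rw [edist_sub_right]
    exact h1 x y
  have hrange : s ⊆ Set.range g := by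
    intro z hz
    have hzW : z + u ∈ W := by
      rw [hW, Submodule.mem_orthogonal_singleton_iff_inner_right]
      rw [inner_add_right, hs z hz, real_inner_self_eq_norm_mul_norm, hu]
      ring
    refine ⟨e ⟨z + u, hzW⟩, ?_⟩
    simp [hg]
  have himg : g '' (g ⁻¹' s) = s := by
    rw [Set.image_preimage_eq_inter_range]
    exact Set.inter_eq_left.2 hrange
  have hmeas : μH[(d:ℝ)-1] s = μH[(d:ℝ)-1] (g ⁻¹' s) := by
    conv_lhs => rw [← himg]
    exact hiso.hausdorffMeasure_image (Or.inl hdim) _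
  rw [hmeas]
  -- the preimage is bounded
  have hbp : Bornology.IsBounded (g ⁻¹' s) := by
    rcases Set.eq_empty_or_nonempty (g ⁻¹' s) with h | ⟨x₀, hx₀⟩
    · rw [h]; exact Bornology.isBounded_empty
    obtain ⟨r, hr⟩ := (Metric.isBounded_iff_subset_closedBall (g x₀)).1 hb
    apply (Metric.isBounded_iff_subset_closedBall x₀).2 ⟨2 * r, fun x hx => ?_⟩
    have h1 : dist (g x) (g x₀) ≤ 2 * r := by
      have ha := hr hx
      have hb' := hr hx₀
      rw [Metric.mem_closedBall] at ha hb'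
      calc dist (g x) (g x₀) ≤ dist (g x) (g x₀) + 0 := by ring_nf; exact le_rfl
      _ ≤ dist (g x) (g x₀) + dist (g x₀) (g x₀) := by simp
      _ ≤ 2 * r := by
          have := dist_triangle (g x) (g x₀) (g x₀)
          have h2 : dist (g x) (g x₀) ≤ r + 0 := by
            calc dist (g x) (g x₀) ≤ r := ha
            _ ≤ r + 0 := by simp
          linarith [dist_nonneg (x := g x₀) (y := g x₀), ha, hb']
    rw [Metric.mem_closedBall, ← hiso.dist_eq x x₀]
    exact h1
  -- use Haar property in the lower-dimensional Euclidean space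
  have hcast : μH[(d:ℝ)-1] (g ⁻¹' s)
      = μH[(Module.finrank ℝ (EuclideanSpace ℝ (Fin m)) : ℝ)] (g ⁻¹' s) := by
    rw [finrank_euclideanSpace_fin, hmd]
  rw [hcast]
  calc μH[(Module.finrank ℝ (EuclideanSpace ℝ (Fin m)) : ℝ)] (g ⁻¹' s)
      ≤ μH[(Module.finrank ℝ (EuclideanSpace ℝ (Fin m)) : ℝ)] (closure (g ⁻¹' s)) :=
        measure_mono subset_closure
    _ < ⊤ := hbp.isCompact_closure.measure_lt_top

end AuxLemmas

set_option maxHeartbeats 2000000 in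
/-- **Section 4.** There is a Borel measure `φ` on `Ω_C` which is finite on every compact
subset of `Ω_C` but is not the surface area measure of any `C`-asymptotic convex set. -/
theorem locally_finite_not_sufficient (d : ℕ) (hd : 2 ≤ d)
    (C : Set (EuclideanSpace ℝ (Fin d))) (hC : IsPCCCone C) :
    ∃ φ : Measure (EuclideanSpace ℝ (Fin d)), φ (omegaC C)ᶜ = 0 ∧
      (∀ ω ⊆ omegaC C, IsCompact ω → φ ω < ⊤) ∧
      ¬ ∃ K : Set (EuclideanSpace ℝ (Fin d)), CAsymptotic C K ∧
          ∀ ω ⊆ omegaC C, MeasurableSet ω → surfMeas K ω = φ ω := by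
  classical
  obtain ⟨hclosed, hconv, hcone, hpointed, hint⟩ := hC
  have hd1 : 1 ≤ d := by omega
  have hexp0 : (0:ℝ) < (d:ℝ) - 1 := by
    have : (2:ℝ) ≤ (d:ℝ) := by exact_mod_cast hd
    linarith
  haveI hatoms : NoAtoms (μH[(d:ℝ)-1] : Measure (EuclideanSpace ℝ (Fin d))) :=
    MeasureTheory.Measure.noAtoms_hausdorff _ hexp0
  have h0C : (0 : EuclideanSpace ℝ (Fin d)) ∈ C := by
    obtain ⟨a, ha⟩ := hint
    simpa using hcone a (interior_subset ha) 0 le_rfl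
  have h0int : (0 : EuclideanSpace ℝ (Fin d)) ∉ interior C := by
    intro h
    obtain ⟨ε, hε, hball⟩ := Metric.isOpen_iff.1 isOpen_interior 0 h
    set v : EuclideanSpace ℝ (Fin d) := EuclideanSpace.single (⟨0, by omega⟩ : Fin d) (1:ℝ)
      with hv
    have hvn : ‖v‖ = 1 := by rw [hv, EuclideanSpace.norm_single]; norm_num
    have hmem : (ε/2) • v ∈ C ∧ -((ε/2) • v) ∈ C := by
      constructor <;>
      · apply interior_subset
        apply hball
        rw [mem_ball_iff_norm]
        simp only [sub_zero, norm_neg, norm_smul, hvn, mul_one,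
          Real.norm_of_nonneg (by positivity : (0:ℝ) ≤ ε/2)]
        linarith
    have hz := hpointed _ hmem.1 hmem.2
    have h2 : ‖(ε/2) • v‖ = 0 := by rw [hz, norm_zero]
    rw [norm_smul, hvn, Real.norm_of_nonneg (by positivity : (0:ℝ) ≤ ε/2)] at h2
    linarith
  obtain ⟨a, haint⟩ := hint
  have haC : a ∈ C := interior_subset haint
  have ha0 : a ≠ 0 := fun h => h0int (h ▸ haint)
  have haN : (0:ℝ) < ‖a‖ := norm_pos_iff.2 ha0
  have hconvP : Convex ℝ (polarCone C) := polar_convex C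
  have hclP : IsClosed (polarCone C) := polar_isClosed C
  have hPCC : IsPCCCone C := ⟨hclosed, hconv, hcone, hpointed, ⟨a, haint⟩⟩
  -- a unit vector in the interior of the polar cone
  obtain ⟨w₀, hw₀⟩ := interior_polar_nonempty hPCC
  have hw₀0 : w₀ ≠ 0 := by
    obtain ⟨δ₀, hδ₀, hw₀le⟩ := inner_le_of_interior hw₀
    intro h
    have h2 := hw₀le a haC
    rw [h, inner_zero_left] at h2
    nlinarith
  set w : EuclideanSpace ℝ (Fin d) := ‖w₀‖⁻¹ • w₀ with hwdef
  have hwint : w ∈ interior (polarCone C) :=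
    smul_mem_interior (fun x hx t ht => polar_smul hx ht) hw₀
      (inv_pos.2 (norm_pos_iff.2 hw₀0))
  have hwn : ‖w‖ = 1 := norm_smul_inv_norm hw₀0
  obtain ⟨δw, hδw, hwle⟩ := inner_le_of_interior hwint
  -- a nonzero vector orthogonal to w
  obtain ⟨v, hvw, hv0⟩ : ∃ v : EuclideanSpace ℝ (Fin d), ⟪w, v⟫ = 0 ∧ v ≠ 0 := by
    haveI : Fact (Module.finrank ℝ (EuclideanSpace ℝ (Fin d)) = (d-1) + 1) :=
      ⟨by rw [finrank_euclideanSpace_fin]; omega⟩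
    have hw0 : w ≠ 0 := by intro h; rw [h, norm_zero] at hwn; norm_num at hwn
    have hfr := Submodule.finrank_orthogonal_span_singleton (𝕜 := ℝ) (n := d - 1) hw0
    have hbot : (ℝ ∙ w)ᗮ ≠ ⊥ := by
      intro h
      rw [h] at hfr
      simp only [finrank_bot] at hfr
      omega
    obtain ⟨v, hv, hv0⟩ := Submodule.exists_mem_ne_zero_of_ne_bot hbot
    exact ⟨v, Submodule.mem_orthogonal_singleton_iff_inner_right.1 hv, hv0⟩
  have hvN : (0:ℝ) < ‖v‖ := norm_pos_iff.2 hv0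
  -- a point b outside C, with the segment from a to b avoiding 0
  set s0 : ℝ := (‖a‖ + ‖a‖/δw + 1)/‖v‖ with hs0def
  set b : EuclideanSpace ℝ (Fin d) := a + s0 • v with hbdef
  have hwa : ⟪w, a⟫ ≤ -δw * ‖a‖ := hwle a haC
  have hwb : ⟪w, b⟫ = ⟪w, a⟫ := by
    rw [hbdef, inner_add_right, real_inner_smul_right, hvw]; ring
  have hbC : b ∉ C := by
    intro hb
    have h1 := hwle b hb
    rw [hwb] at h1
    have h3 : -⟪w, a⟫ ≤ ‖a‖ := by
      have h := abs_real_inner_le_norm w a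
      rw [hwn, one_mul] at h
      have := (abs_le.1 h).1
      linarith
    have h2 : ‖b‖ ≤ ‖a‖/δw := by
      rw [le_div_iff₀ hδw]
      nlinarith
    have h4 : s0 * ‖v‖ - ‖a‖ ≤ ‖b‖ := by
      have h5 : ‖s0 • v‖ ≤ ‖a + s0 • v‖ + ‖a‖ := by
        have h6 := norm_sub_le (a + s0 • v) a
        rwa [add_sub_cancel_left] at h6
      rw [norm_smul, Real.norm_of_nonneg (by positivity)] at h5
      have h7 : ‖b‖ = ‖a + s0 • v‖ := by rw [hbdef]
      linarith
    have h5 : s0 * ‖v‖ = ‖a‖ + ‖a‖/δw + 1 := by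
      rw [hs0def]; field_simp
    linarith
  -- a nonzero boundary point p of C
  obtain ⟨p, hpC, hpint, hpw⟩ : ∃ p, p ∈ C ∧ p ∉ interior C ∧ ⟪w, p⟫ = ⟪w, a⟫ := by
    set T : Set ℝ := {t | t ∈ Icc (0:ℝ) 1 ∧ a + t • (b - a) ∈ C} with hT
    have hTne : T.Nonempty := ⟨0, ⟨le_rfl, zero_le_one⟩, by simpa using haC⟩
    have hTbdd : BddAbove T := ⟨1, fun t ht => ht.1.2⟩
    have hTclosed : IsClosed T := by
      apply IsClosed.inter isClosed_Icc
      exact IsClosed.preimage (continuous_const.add (continuous_id.smul continuous_const)) hclosed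
    set t₀ := sSup T with ht₀
    have ht₀T : t₀ ∈ T := hTclosed.csSup_mem hTne hTbdd
    have ht₀1 : t₀ < 1 := by
      rcases lt_or_eq_of_le ht₀T.1.2 with h | h
      · exact h
      · exfalso; apply hbC; have h2 := ht₀T.2; rw [h] at h2; simpa using h2
    refine ⟨a + t₀ • (b - a), ht₀T.2, ?_, ?_⟩
    · intro hmem
      obtain ⟨ε, hε, hball⟩ := Metric.isOpen_iff.1 isOpen_interior _ hmem
      have hba : b - a ≠ 0 := by
        intro h
        apply hbC
        have : b = a := by rwa [sub_eq_zero] at h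
        rw [this]; exact haC
      have hbaN : (0:ℝ) < ‖b - a‖ := norm_pos_iff.2 hba
      set η : ℝ := min (ε/(2*‖b-a‖)) (1 - t₀) with hη
      have hηpos : 0 < η := lt_min (by positivity) (by linarith)
      have hmem2 : t₀ + η ∈ T := by
        refine ⟨⟨by linarith [ht₀T.1.1], by
          have hle : η ≤ 1 - t₀ := min_le_right _ _
          linarith⟩, ?_⟩
        apply interior_subset
        apply hball
        rw [mem_ball_iff_norm]
        have heq : a + (t₀ + η) • (b - a) - (a + t₀ • (b - a)) = η • (b - a) := by
          rw [add_smul]; abel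
        rw [heq, norm_smul, Real.norm_of_nonneg hηpos.le]
        have hle : η ≤ ε/(2*‖b-a‖) := min_le_left _ _
        calc η * ‖b - a‖ ≤ (ε/(2*‖b-a‖)) * ‖b - a‖ := by nlinarith
        _ = ε/2 := by field_simp
        _ < ε := by linarith
      have := le_csSup hTbdd hmem2
      linarith
    · rw [inner_add_right, real_inner_smul_right, inner_sub_right, hwb]
      ring
  have hp0 : p ≠ 0 := by
    intro h
    rw [h, inner_zero_right] at hpw
    nlinarith
  have hpN : (0:ℝ) < ‖p‖ := norm_pos_iff.2 hp0
  -- supporting unit normal u₀ at p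
  obtain ⟨u₀, hu₀n, hu₀polar, hu₀p⟩ :
      ∃ u₀ : EuclideanSpace ℝ (Fin d), ‖u₀‖ = 1 ∧ u₀ ∈ polarCone C ∧ ⟪u₀, p⟫ = 0 := by
    obtain ⟨f, r, hfa, hfp⟩ := geometric_hahn_banach_open (hconv.interior) isOpen_interior
      (convex_singleton p) (disjoint_singleton_right.2 hpint)
    have hfp' : r ≤ f p := hfp p rfl
    have hfC : ∀ y ∈ C, f y ≤ r := by
      intro y hy
      apply le_of_forall_pos_le_add
      intro ε hε
      set lam : ℝ := min 1 (ε/(|f y - f a| + 1)) with hlam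
      have hlam0 : 0 < lam := lt_min one_pos (by positivity)
      have hlam1 : lam ≤ 1 := min_le_left _ _
      have hcomb : lam • a + (1 - lam) • y ∈ interior C :=
        hconv.combo_interior_closure_mem_interior haint
          (subset_closure hy) hlam0 (by linarith) (by ring)
      have h2 := hfa _ hcomb
      rw [map_add, _root_.map_smul, _root_.map_smul, smul_eq_mul, smul_eq_mul] at h2
      have h3 : lam * (f y - f a) < ε := by
        have hle : lam ≤ ε/(|f y - f a| + 1) := min_le_right _ _
        have habs : (0:ℝ) ≤ |f y - f a| := abs_nonneg _
        have h4 : lam * (f y - f a) ≤ lam * |f y - f a| :=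
          mul_le_mul_of_nonneg_left (le_abs_self _) hlam0.le
        have h5 : lam * |f y - f a| ≤ (ε/(|f y - f a| + 1)) * |f y - f a| :=
          mul_le_mul_of_nonneg_right hle habs
        have h6 : (ε/(|f y - f a| + 1)) * |f y - f a| < ε := by
          rw [div_mul_eq_mul_div, div_lt_iff₀ (by positivity)]
          have := lt_add_one |f y - f a|
          exact (mul_lt_mul_iff_right₀ hε).2 this
        linarith
      linarith
    have hr0 : 0 ≤ r := by
      have := hfC 0 h0C
      simpa using this
    have hfCle : ∀ y ∈ C, f y ≤ 0 := by
      intro y hy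
      by_contra hpos
      push_neg at hpos
      have ht : (0:ℝ) ≤ (r+1)/(f y) := by positivity
      have h2 := hfC (((r+1)/(f y)) • y) (hcone y hy _ ht)
      rw [_root_.map_smul, smul_eq_mul, div_mul_cancel₀ _ hpos.ne'] at h2
      linarith
    have hfpzero : f p = 0 := le_antisymm (hfCle p hpC) (le_trans hr0 hfp')
    set y₀ := (InnerProductSpace.toDual ℝ (EuclideanSpace ℝ (Fin d))).symm f with hy₀
    have hy₀inner : ∀ z, ⟪y₀, z⟫ = f z := fun z => by
      rw [hy₀, InnerProductSpace.toDual_symm_apply]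
    have hy₀0 : y₀ ≠ 0 := by
      intro h
      have h2 := hy₀inner a
      rw [h, inner_zero_left] at h2
      have h3 := hfa a haint
      have hrz : r = 0 := le_antisymm (by linarith [hfp', hfCle p hpC]) hr0
      rw [hrz] at h3
      linarith
    refine ⟨‖y₀‖⁻¹ • y₀, norm_smul_inv_norm hy₀0, ?_, ?_⟩
    · apply polar_smul _ (by positivity)
      intro z hz
      rw [hy₀inner]
      exact hfCle z hz
    · rw [real_inner_smul_left, hy₀inner, hfpzero, mul_zero]
  have hu₀nint : u₀ ∉ interior (polarCone C) := by
    intro h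
    obtain ⟨δ, hδ, hle⟩ := inner_le_of_interior h
    have h2 := hle p hpC
    rw [hu₀p] at h2
    nlinarith
  have hu₀Ω : u₀ ∉ omegaC C := fun h => hu₀nint h.2
  -- the boundary ray direction
  set xh : EuclideanSpace ℝ (Fin d) := ‖p‖⁻¹ • p with hxh
  have hxhn : ‖xh‖ = 1 := norm_smul_inv_norm hp0
  have hxhu₀ : ⟪u₀, xh⟫ = 0 := by rw [hxh, real_inner_smul_right, hu₀p, mul_zero]
  have hxhfr : ∀ t : ℝ, 0 < t → t • xh ∈ frontier C := by
    intro t ht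
    rw [hclosed.frontier_eq]
    have heq : t • xh = (t * ‖p‖⁻¹) • p := by rw [hxh, smul_smul]
    constructor
    · rw [heq]; exact hcone p hpC _ (by positivity)
    · intro hmem
      apply hpint
      have hpos : (0:ℝ) < t * ‖p‖⁻¹ := by positivity
      have h2 := smul_mem_interior hcone (heq ▸ hmem) (inv_pos.2 hpos)
      rwa [smul_smul, inv_mul_cancel₀ hpos.ne', one_smul] at h2
  -- the sequence of directions u i → u₀ inside Ω_C
  set vv : ℝ → EuclideanSpace ℝ (Fin d) := fun t => t • w + (1-t) • u₀ with hvv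
  have hvvmem : ∀ t : ℝ, 0 < t → t ≤ 1 → vv t ∈ interior (polarCone C) := fun t h1 h2 =>
    hconvP.combo_interior_closure_mem_interior hwint (subset_closure hu₀polar) h1
      (by linarith) (by ring)
  have hvvne : ∀ t : ℝ, 0 < t → t < 1/2 → vv t ≠ 0 := by
    intro t h1 h2 h0
    have hinner : ⟪u₀, vv t⟫ = t * ⟪u₀, w⟫ + (1-t) * (‖u₀‖*‖u₀‖) := by
      rw [hvv]
      simp only [inner_add_right, real_inner_smul_right, real_inner_self_eq_norm_mul_norm]
    rw [h0, inner_zero_right] at hinner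
    have hbound : -1 ≤ ⟪u₀, w⟫ := by
      have h := abs_real_inner_le_norm u₀ w
      rw [hu₀n, hwn, one_mul] at h
      linarith [(abs_le.1 h).1]
    rw [hu₀n] at hinner
    nlinarith
  set tseq : ℕ → ℝ := fun i => 1/((i:ℝ)+3) with htseq
  have htpos : ∀ i, 0 < tseq i := fun i => by positivity
  have htlt : ∀ i, tseq i < 1/2 := by
    intro i
    rw [htseq]
    have h1 : (2:ℝ) < (i:ℝ)+3 := by
      have : (0:ℝ) ≤ (i:ℝ) := Nat.cast_nonneg i
      linarith
    rw [div_lt_div_iff₀ (by linarith) (by norm_num)]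
    linarith
  set u : ℕ → EuclideanSpace ℝ (Fin d) :=
    fun i => ‖vv (tseq i)‖⁻¹ • vv (tseq i) with hudef
  have hvvint : ∀ i, vv (tseq i) ∈ interior (polarCone C) :=
    fun i => hvvmem _ (htpos i) (by linarith [htlt i])
  have hvvne' : ∀ i, vv (tseq i) ≠ 0 := fun i => hvvne _ (htpos i) (htlt i)
  have huint : ∀ i, u i ∈ interior (polarCone C) := fun i =>
    smul_mem_interior (fun x hx t ht => polar_smul hx ht) (hvvint i)
      (inv_pos.2 (norm_pos_iff.2 (hvvne' i)))
  have hun : ∀ i, ‖u i‖ = 1 := fun i => norm_smul_inv_norm (hvvne' i)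
  have huΩ : ∀ i, u i ∈ omegaC C := fun i =>
    ⟨mem_sphere_zero_iff_norm.2 (hun i), huint i⟩
  have hutend : Filter.Tendsto u Filter.atTop (nhds u₀) := by
    have h1 : Filter.Tendsto tseq Filter.atTop (nhds 0) := by
      rw [htseq]
      simp only [one_div]
      apply Filter.Tendsto.inv_tendsto_atTop
      apply Filter.tendsto_atTop_add_const_right
      exact tendsto_natCast_atTop_atTop
    have hvvcont : Continuous vv := by
      rw [hvv]
      exact (continuous_id.smul continuous_const).add
        ((continuous_const.sub continuous_id).smul continuous_const)
    have h2 : Filter.Tendsto (fun i => vv (tseq i)) Filter.atTop (nhds (vv 0)) :=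
      (hvvcont.tendsto 0).comp h1
    have hvv0 : vv 0 = u₀ := by rw [hvv]; simp
    rw [hvv0] at h2
    have h3 : ContinuousAt (fun x : EuclideanSpace ℝ (Fin d) => ‖x‖⁻¹ • x) u₀ := by
      apply ContinuousAt.fun_smul
      · exact (continuous_norm.continuousAt).inv₀ (by rw [hu₀n]; norm_num)
      · exact continuousAt_id
    have h4 := h3.tendsto.comp h2
    have h5 : ‖u₀‖⁻¹ • u₀ = u₀ := by rw [hu₀n]; simp
    rw [Function.comp_def] at h4
    rw [hudef]
    simpa [h5] using h4
  -- the slices and their measures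
  have hslice : ∀ i, Bornology.IsBounded (C ∩ {z | ⟪u i, z⟫ = (-1:ℝ)}) := by
    intro i
    obtain ⟨δ, hδ, hle⟩ := inner_le_of_interior (huint i)
    apply (Metric.isBounded_iff_subset_closedBall 0).2 ⟨1/δ, ?_⟩
    rintro z ⟨hzC, hz⟩
    rw [Metric.mem_closedBall, dist_zero_right]
    have h1 := hle z hzC
    rw [Set.mem_setOf_eq] at hz
    rw [hz] at h1
    rw [le_div_iff₀ hδ]
    nlinarith
  set cE : ℕ → ℝ≥0∞ := fun i => μH[(d:ℝ)-1] (C ∩ {z | ⟪u i, z⟫ = (-1:ℝ)}) with hcE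
  have hcfin : ∀ i, cE i < ⊤ := fun i => slice_finite hd1 (hun i) (hslice i) (fun z hz => hz.2)
  set aa : ℕ → ℝ≥0∞ := fun i => cE i + 1 with haa
  have haafin : ∀ i, aa i < ⊤ := fun i =>
    ENNReal.add_lt_top.2 ⟨hcfin i, ENNReal.one_lt_top⟩
  have haa1 : ∀ i, 1 ≤ aa i := fun i => le_add_self
  set φ : Measure (EuclideanSpace ℝ (Fin d)) :=
    Measure.sum (fun i => aa i • Measure.dirac (u i)) with hφ
  have hΩmeas : MeasurableSet (omegaC C) :=
    (isClosed_sphere).measurableSet.inter isOpen_interior.measurableSet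
  refine ⟨φ, ?_, ?_, ?_⟩
  · rw [hφ, Measure.sum_apply _ hΩmeas.compl]
    have hterm : ∀ i, (aa i • Measure.dirac (u i)) (omegaC C)ᶜ = 0 := by
      intro i
      rw [Measure.smul_apply, Measure.dirac_apply' _ hΩmeas.compl,
        Set.indicator_of_notMem (by simpa using huΩ i), smul_zero]
    simp only [hterm, tsum_zero]
  · intro ω hω hωc
    have hωmeas := hωc.isClosed.measurableSet
    rw [hφ, Measure.sum_apply _ hωmeas]
    have hu₀ω : u₀ ∉ ω := fun h => hu₀Ω (hω h)
    have hopen : IsOpen ωᶜ := hωc.isClosed.isOpen_compl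
    have hev : ∀ᶠ i in Filter.atTop, u i ∈ ωᶜ :=
      hutend.eventually (Filter.eventually_mem_set.2 (hopen.mem_nhds hu₀ω))
    obtain ⟨N, hN⟩ := Filter.eventually_atTop.1 hev
    have hterm : ∀ i ∉ Finset.range N, (aa i • Measure.dirac (u i)) ω = 0 := by
      intro i hi
      rw [Finset.mem_range, not_lt] at hi
      rw [Measure.smul_apply, Measure.dirac_apply' _ hωmeas,
        Set.indicator_of_notMem (hN i hi), smul_zero]
    rw [tsum_eq_sum hterm]
    apply ENNReal.sum_lt_top.2
    intro i _
    rw [Measure.smul_apply, smul_eq_mul]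
    calc aa i * Measure.dirac (u i) ω ≤ aa i * 1 := by
          apply mul_le_mul_right
          exact prob_le_one
    _ = aa i := mul_one _
    _ < ⊤ := haafin i
  · rintro ⟨K, ⟨hKne, hKcl, hKconv, hKC, hKas⟩, hsurf⟩
    have hKsub : frontier K ⊆ K := fun x hx => hKcl.closure_eq ▸ frontier_subset_closure hx
    have hsing : ∀ i, MeasurableSet ({u i} : Set (EuclideanSpace ℝ (Fin d))) :=
      fun i => measurableSet_singleton _
    have hφsing : ∀ i, aa i ≤ surfMeas K {u i} := by
      intro i
      rw [hsurf {u i} (Set.singleton_subset_iff.2 (huΩ i)) (hsing i), hφ,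
        Measure.sum_apply _ (hsing i)]
      have hterm : aa i = (aa i • Measure.dirac (u i)) {u i} := by
        rw [Measure.smul_apply, Measure.dirac_apply' _ (hsing i)]
        simp
      rw [hterm]
      exact ENNReal.le_tsum i
    have key : ∀ i, ∃ x ∈ K, (∀ y ∈ K, ⟪u i, y⟫ ≤ ⟪u i, x⟫) ∧ ⟪u i, x⟫ < -1 := by
      intro i
      have hne : (revSphImage K {u i}).Nonempty := by
        by_contra h
        rw [Set.not_nonempty_iff_eq_empty] at h
        have h1 : surfMeas K {u i} = 0 := by rw [surfMeas, h, measure_empty]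
        have h2 := hφsing i
        rw [h1] at h2
        have := le_trans (haa1 i) h2
        simp at this
      obtain ⟨x, hxfr, u', hu', hxsup⟩ := hne
      rw [Set.mem_singleton_iff] at hu'
      subst hu'
      have hxK : x ∈ K := hKsub hxfr
      refine ⟨x, hxK, hxsup, ?_⟩
      have hhle : ⟪u i, x⟫ ≤ 0 :=
        (interior_subset (huint i)) x (hKC hxK)
      by_contra hge
      push_neg at hge
      have hτeq : ∀ z ∈ revSphImage K {u i}, ⟪u i, z⟫ = ⟪u i, x⟫ := by
        rintro z ⟨hzfr, u'', hu'', hzsup⟩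
        rw [Set.mem_singleton_iff] at hu''
        subst hu''
        exact le_antisymm (hxsup z (hKsub hzfr)) (hzsup x hxK)
      rcases eq_or_lt_of_le hhle with heq | hlt
      · obtain ⟨δ, hδ, hle⟩ := inner_le_of_interior (huint i)
        have hsub : revSphImage K {u i} ⊆ {(0 : EuclideanSpace ℝ (Fin d))} := by
          intro z hz
          have h1 := hτeq z hz
          have h2 := hle z (hKC (hKsub hz.1))
          rw [h1, heq] at h2
          have h3 : ‖z‖ ≤ 0 := by nlinarith
          rw [Set.mem_singleton_iff]
          exact norm_le_zero_iff.1 h3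
        have h4 : surfMeas K {u i} ≤ μH[(d:ℝ)-1] ({(0:EuclideanSpace ℝ (Fin d))} : Set _) :=
          measure_mono hsub
        rw [NullSingletonClass.measure_singleton (self := hatoms)] at h4
        have h5 := le_trans (le_trans (haa1 i) (hφsing i)) h4
        simp at h5
      · set h0 : ℝ := ⟪u i, x⟫ with hh0
        have hh0ne : -h0 ≠ 0 := by
          rw [neg_ne_zero]
          exact ne_of_lt hlt
        have himg : revSphImage K {u i} ⊆
            (fun z : EuclideanSpace ℝ (Fin d) => (-h0) • z) ''
              (C ∩ {z | ⟪u i, z⟫ = (-1:ℝ)}) := by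
          intro z hz
          have h1 := hτeq z hz
          have hzC := hKC (hKsub hz.1)
          refine ⟨(-h0)⁻¹ • z, ⟨hcone z hzC _ (by
            apply inv_nonneg.2; linarith), ?_⟩, ?_⟩
          · rw [Set.mem_setOf_eq, real_inner_smul_right, h1]
            rw [inv_neg, neg_mul, inv_mul_cancel₀ hlt.ne]
          · show (-h0) • ((-h0)⁻¹ • z) = z
            rw [smul_smul, mul_inv_cancel₀ hh0ne, one_smul]
        have hb1 : surfMeas K {u i} ≤
            (‖(-h0)‖₊ : ℝ≥0∞) ^ ((d:ℝ)-1) * cE i := by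
          calc surfMeas K {u i}
              ≤ μH[(d:ℝ)-1] ((fun z : EuclideanSpace ℝ (Fin d) => (-h0) • z) ''
                (C ∩ {z | ⟪u i, z⟫ = (-1:ℝ)})) := measure_mono himg
          _ ≤ _ := (lipschitzWith_smul (-h0)).hausdorffMeasure_image_le hexp0.le _
        have hle1 : (‖(-h0)‖₊ : ℝ≥0∞) ≤ 1 := by
          rw [ENNReal.coe_le_one_iff, ← NNReal.coe_le_coe, coe_nnnorm,
            Real.norm_eq_abs, abs_of_pos (by linarith : (0:ℝ) < -h0)]
          push_cast
          linarith
        have hpow : (‖(-h0)‖₊ : ℝ≥0∞) ^ ((d:ℝ)-1) ≤ 1 :=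
          ENNReal.rpow_le_one hle1 hexp0.le
        have hfin : surfMeas K {u i} ≤ cE i := by
          calc surfMeas K {u i} ≤ (‖(-h0)‖₊ : ℝ≥0∞) ^ ((d:ℝ)-1) * cE i := hb1
          _ ≤ 1 * cE i := mul_le_mul_left hpow _
          _ = cE i := one_mul _
        have hcontra := le_trans (hφsing i) hfin
        rw [haa] at hcontra
        exact absurd hcontra (ENNReal.lt_add_right (hcfin i).ne one_ne_zero).not_ge
    -- final contradiction via the asymptotic property
    obtain ⟨R, hR⟩ := hKas (1/4) (by norm_num)
    set t : ℝ := max R 1 with htdef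
    have ht0 : (0:ℝ) < t := lt_of_lt_of_le one_pos (le_max_right R 1)
    have htR : R ≤ t := le_max_left _ _
    obtain ⟨N, hNlt⟩ := (Metric.tendsto_atTop.1 hutend) (1/(4*t)) (by positivity)
    have hdist := hNlt N le_rfl
    obtain ⟨x, hxK, hxsup, hxlt⟩ := key N
    have hfr : t • xh ∈ frontier C := hxhfr t ht0
    have hnorm : ‖t • xh‖ = t := by
      rw [norm_smul, hxhn, mul_one, Real.norm_of_nonneg ht0.le]
    have hinf := hR (t • xh) hfr (by rw [hnorm]; exact htR)
    obtain ⟨y, hyK, hydist⟩ := (Metric.infDist_lt_iff hKne).1 hinf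
    have h1 : ⟪u N, y⟫ ≤ ⟪u N, x⟫ := hxsup y hyK
    have h2 : ⟪u N, y⟫ = ⟪u N, t • xh⟫ + ⟪u N, y - t • xh⟫ := by
      rw [← inner_add_right]
      congr 1
      abel
    have h3 : ⟪u N, t • xh⟫ = t * ⟪u N - u₀, xh⟫ := by
      rw [real_inner_smul_right]
      have : ⟪u N - u₀, xh⟫ = ⟪u N, xh⟫ - ⟪u₀, xh⟫ := inner_sub_left _ _ _
      rw [this, hxhu₀, sub_zero]
    have h4 : |⟪u N - u₀, xh⟫| ≤ ‖u N - u₀‖ := by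
      have h := abs_real_inner_le_norm (u N - u₀) xh
      rwa [hxhn, mul_one] at h
    have h5 : ‖u N - u₀‖ < 1/(4*t) := by
      rw [← dist_eq_norm]
      exact hdist
    have h6 : |⟪u N, y - t • xh⟫| ≤ ‖y - t • xh‖ := by
      have h := abs_real_inner_le_norm (u N) (y - t • xh)
      rwa [hun N, one_mul] at h
    have h7 : ‖y - t • xh‖ < 1/4 := by
      rw [← dist_eq_norm, dist_comm]
      exact hydist
    have habs1 := (abs_le.1 h4).1
    have habs2 := (abs_le.1 h6).1
    have hkey1 : -(1/4 : ℝ) ≤ t * ⟪u N - u₀, xh⟫ := by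
      have hge : -(1/(4*t)) ≤ ⟪u N - u₀, xh⟫ := by linarith
      have hmul := mul_le_mul_of_nonneg_left hge ht0.le
      have heq : t * (-(1/(4*t))) = -(1/4 : ℝ) := by
        field_simp
      linarith
    have hkey2 : -(1/4 : ℝ) ≤ ⟪u N, y - t • xh⟫ := by linarith
    rw [h3] at h2
    linarith [hxlt, h1, h2, hkey1, hkey2]

end
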